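/- Completeness of the RTD-hardness reduction: Let G = (V,E) be a finite graph with a dominating set T of size k, with k ≥ 1. Let Z, H, X, c_h, c_{u,h} be as in the reduction, and C = {c_h : h ∈ H} ∪ {c_{u,h} : u ∈ V, h ∈ H}. Then RTD(C) ≤ k. -/

import Mathlib

/-- A set `S` is a teaching set of `c` with respect to the class `C`:
every other concept in `C` differs from `c` on some point of `S`. -/
def IsTeachingSet {X : Type*} (C : Finset (X → Bool)) (c : X → Bool) (S : Finset X) : Prop :=
  ∀ c' ∈ C, c' ≠ c → ∃ x ∈ S, c x ≠ c' x

/-- Minimum teaching set size of `c` with respect to `C`. -/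
noncomputable def TS {X : Type*} (C : Finset (X → Bool)) (c : X → Bool) : ℕ :=
  sInf {n | ∃ S : Finset X, S.card = n ∧ IsTeachingSet C c S}

/-- A teaching plan: an ordering of all concepts of `C` (as first components)
together with sets that teach each concept w.r.t. the remaining suffix. -/
def IsTeachingPlan {X : Type*} [Fintype X] [DecidableEq X]
    (C : Finset (X → Bool)) (L : List ((X → Bool) × Finset X)) : Prop :=
  (L.map Prod.fst).Nodup ∧ (L.map Prod.fst).toFinset = C ∧
  ∀ i (hi : i < L.length),
    IsTeachingSet ((L.drop i).map Prod.fst).toFinset (L.get ⟨i, hi⟩).1 (L.get ⟨i, hi⟩).2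

/-- Recursive teaching dimension. -/
noncomputable def RTD {X : Type*} [Fintype X] [DecidableEq X] (C : Finset (X → Bool)) : ℕ :=
  sInf {k | ∃ L, IsTeachingPlan C L ∧ ∀ p ∈ L, p.2.card ≤ k}

/-- The gadget class: all boolean functions on `Z` with exactly `k` ones. -/
def gadgetH (Z : Type*) [Fintype Z] [DecidableEq Z] (k : ℕ) : Finset (Z → Bool) :=
  Finset.univ.filter fun h => (Finset.univ.filter fun z => h z = true).card = k

/-- The concept `c_h` of the reduction: all-one on `Z × V`, `h(z)` on `V × Z`. -/
def cH {V Z : Type*} (h : Z → Bool) : (V × Z) ⊕ (Z × V) → Bool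
  | Sum.inl p => h p.2
  | Sum.inr _ => true

/-- The concept `c_{u,h}` of the reduction. -/
def cUH {V Z : Type*} [DecidableEq V] (G : SimpleGraph V) [DecidableRel G.Adj]
    (u : V) (h : Z → Bool) : (V × Z) ⊕ (Z × V) → Bool
  | Sum.inl p => !decide (p.1 = u ∨ G.Adj u p.1)
  | Sum.inr p => h p.1 && decide (u = p.2)

/-- The full concept class of the reduction. -/
noncomputable def redC {V Z : Type*} [Fintype V] [DecidableEq V] [Fintype Z] [DecidableEq Z]
    (G : SimpleGraph V) [DecidableRel G.Adj] (k : ℕ) :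
    Finset (((V × Z) ⊕ (Z × V)) → Bool) :=
  (gadgetH Z k).image (cH (V := V)) ∪
    ((Finset.univ : Finset V) ×ˢ gadgetH Z k).image fun p => cUH G p.1 p.2

section Aux

variable {V Z : Type*} [Fintype V] [DecidableEq V] [Fintype Z] [DecidableEq Z]

/-- The support of a boolean function as a finset. -/
def bsupp (h : Z → Bool) : Finset Z := Finset.univ.filter fun z => h z = true

lemma gadget_card {k : ℕ} {h : Z → Bool} (hh : h ∈ gadgetH Z k) : (bsupp h).card = k := by
  simpa [gadgetH, bsupp] using hh

lemma gadget_exists_true {k : ℕ} (hk : 1 ≤ k) {h : Z → Bool} (hh : h ∈ gadgetH Z k) :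
    ∃ z, h z = true := by
  have h1 := gadget_card hh
  have h2 : (bsupp h).Nonempty := by rw [← Finset.card_pos, h1]; omega
  obtain ⟨z, hz⟩ := h2
  exact ⟨z, (Finset.mem_filter.mp hz).2⟩

lemma gadget_exists_false {k : ℕ} (hZ : Fintype.card Z = 2 * k + 1) {h : Z → Bool}
    (hh : h ∈ gadgetH Z k) : ∃ z, h z = false := by
  by_contra hc
  push_neg at hc
  have h1 : (bsupp h) = Finset.univ := by
    apply Finset.eq_univ_iff_forall.mpr
    intro z
    simp only [bsupp, Finset.mem_filter, Finset.mem_univ, true_and]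
    have := hc z; revert this; cases h z <;> simp
  have := gadget_card hh
  rw [h1, Finset.card_univ, hZ] at this
  omega

lemma gadget_sub {k : ℕ} {h h' : Z → Bool} (hh : h ∈ gadgetH Z k) (hh' : h' ∈ gadgetH Z k)
    (hsub : ∀ z, h z = true → h' z = true) : h = h' := by
  have h1 := gadget_card hh
  have h2 := gadget_card hh'
  have hss : bsupp h ⊆ bsupp h' := by
    intro z hz
    simp only [bsupp, Finset.mem_filter, Finset.mem_univ, true_and] at hz ⊢
    exact hsub z hz
  have heq := Finset.eq_of_subset_of_card_le hss (by omega)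
  funext z
  have hm : z ∈ bsupp h ↔ z ∈ bsupp h' := by rw [heq]
  simp only [bsupp, Finset.mem_filter, Finset.mem_univ, true_and] at hm
  cases hz : h z <;> cases hz' : h' z <;> simp_all

lemma gadget_diff {k : ℕ} {h h' : Z → Bool} (hh : h ∈ gadgetH Z k) (hh' : h' ∈ gadgetH Z k)
    (hne : h ≠ h') : ∃ z, h z = true ∧ h' z = false := by
  by_contra hc
  push_neg at hc
  exact hne (gadget_sub hh hh' (fun z hz => by
    have := hc z hz; revert this; cases h' z <;> simp))

lemma cH_ne_cUH {k : ℕ} (G : SimpleGraph V) [DecidableRel G.Adj]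
    (hZ : Fintype.card Z = 2 * k + 1) {h h' : Z → Bool} (hh' : h' ∈ gadgetH Z k) (u : V) :
    cH (V := V) h ≠ cUH G u h' := by
  obtain ⟨z, hz⟩ := gadget_exists_false hZ hh'
  intro he
  have := congrFun he (Sum.inr (z, u))
  simp [cH, cUH, hz] at this

lemma cUH_inj {k : ℕ} (G : SimpleGraph V) [DecidableRel G.Adj] (hk : 1 ≤ k)
    {u u' : V} {h h' : Z → Bool} (hh : h ∈ gadgetH Z k)
    (he : cUH G u h = cUH G u' h') : u = u' ∧ h = h' := by
  obtain ⟨z₀, hz₀⟩ := gadget_exists_true hk hh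
  have huu : u = u' := by
    by_contra hne
    have := congrFun he (Sum.inr (z₀, u))
    simp [cUH, hz₀, Ne.symm hne] at this
  subst huu
  refine ⟨rfl, funext fun z => ?_⟩
  have := congrFun he (Sum.inr (z, u))
  simpa [cUH] using this

lemma cH_inj [Nonempty V] {h h' : Z → Bool} (he : cH (V := V) h = cH h') : h = h' := by
  funext z
  have := congrFun he (Sum.inl (Classical.arbitrary V, z))
  simpa [cH] using this

end Aux

theorem stmt13 {V Z : Type*} [Fintype V] [DecidableEq V] [Fintype Z] [DecidableEq Z]
    (G : SimpleGraph V) [DecidableRel G.Adj]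
    (k : ℕ) (hk : 1 ≤ k) (hZ : Fintype.card Z = 2 * k + 1)
    (T : Finset V) (hTcard : T.card = k)
    (hdom : ∀ u : V, ∃ v ∈ T, v = u ∨ G.Adj u v) :
    RTD (redC (Z := Z) G k) ≤ k := by
  classical
  have hVne : Nonempty V := by
    have hT : T.Nonempty := Finset.card_pos.mp (by omega)
    exact ⟨hT.choose⟩
  set HH := gadgetH Z k with hHH
  -- the teaching sets
  set setH : (Z → Bool) → Finset ((V × Z) ⊕ (Z × V)) :=
    fun h => ((T.toList.zip (bsupp h).toList).map Sum.inl).toFinset with hsetH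
  set setU : V → (Z → Bool) → Finset ((V × Z) ⊕ (Z × V)) :=
    fun u h => (bsupp h).image fun z => Sum.inr (z, u) with hsetU
  -- zip facts
  have hzlen : ∀ h ∈ HH, (bsupp h).toList.length = T.toList.length := by
    intro h hh
    rw [Finset.length_toList, Finset.length_toList, gadget_card hh, hTcard]
  have hzip_snd : ∀ h ∈ HH, (T.toList.zip (bsupp h).toList).map Prod.snd = (bsupp h).toList :=
    fun h hh => List.map_snd_zip (hzlen h hh).le
  have hzip_fst : ∀ h ∈ HH, (T.toList.zip (bsupp h).toList).map Prod.fst = T.toList :=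
    fun h hh => List.map_fst_zip (hzlen h hh).ge
  -- teaching set property for the cH concepts, w.r.t. the full class
  have TS_H : ∀ h ∈ HH, IsTeachingSet (redC (Z := Z) G k) (cH h) (setH h) := by
    intro h hh c' hc' hne
    rcases Finset.mem_union.mp hc' with hc1 | hc2
    · obtain ⟨h', hh', rfl⟩ := Finset.mem_image.mp hc1
      have hne' : h ≠ h' := fun he => hne (by rw [he])
      obtain ⟨z, hz1, hz2⟩ := gadget_diff hh hh' hne'
      have hzl : z ∈ (T.toList.zip (bsupp h).toList).map Prod.snd := by
        rw [hzip_snd h hh, Finset.mem_toList]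
        simp [bsupp, hz1]
      obtain ⟨p, hp, hpz⟩ := List.mem_map.mp hzl
      refine ⟨Sum.inl p, ?_, ?_⟩
      · simp only [hsetH, List.mem_toFinset, List.mem_map]
        exact ⟨p, hp, rfl⟩
      · simp only [cH, hpz, hz1, hz2]
        simp
    · obtain ⟨⟨u, h''⟩, hm, rfl⟩ := Finset.mem_image.mp hc2
      obtain ⟨v, hvT, hvdom⟩ := hdom u
      have hvl : v ∈ (T.toList.zip (bsupp h).toList).map Prod.fst := by
        rw [hzip_fst h hh, Finset.mem_toList]; exact hvT
      obtain ⟨p, hp, hpv⟩ := List.mem_map.mp hvl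
      have hps : p.2 ∈ (bsupp h).toList := by
        rw [← hzip_snd h hh]; exact List.mem_map.mpr ⟨p, hp, rfl⟩
      rw [Finset.mem_toList] at hps
      have hpst : h p.2 = true := by simpa [bsupp] using hps
      refine ⟨Sum.inl p, ?_, ?_⟩
      · simp only [hsetH, List.mem_toFinset, List.mem_map]
        exact ⟨p, hp, rfl⟩
      · simp only [cH, cUH, hpst, hpv, hvdom]
        simp
  -- teaching set property for the cUH concepts, w.r.t. the cUH-part only
  have TS_U : ∀ u : V, ∀ h ∈ HH, ∀ C' ⊆ ((Finset.univ ×ˢ HH).image fun p => cUH G p.1 p.2),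
      IsTeachingSet C' (cUH G u h) (setU u h) := by
    intro u h hh C' hC' c' hc' hne
    obtain ⟨⟨u', h''⟩, hm, rfl⟩ := Finset.mem_image.mp (hC' hc')
    have hh'' : h'' ∈ HH := (Finset.mem_product.mp hm).2
    by_cases huu : u' = u
    · subst huu
      have hne' : h ≠ h'' := fun he => hne (by rw [he])
      obtain ⟨z, hz1, hz2⟩ := gadget_diff hh hh'' hne'
      refine ⟨Sum.inr (z, u'), ?_, ?_⟩
      · exact Finset.mem_image.mpr ⟨z, by simp [bsupp, hz1], rfl⟩
      · simp [cUH, hz1, hz2]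
    · obtain ⟨z, hz⟩ := gadget_exists_true hk hh
      refine ⟨Sum.inr (z, u), ?_, ?_⟩
      · exact Finset.mem_image.mpr ⟨z, by simp [bsupp, hz], rfl⟩
      · simp [cUH, hz, huu]
  -- the teaching plan
  set L1 : List (((V × Z) ⊕ (Z × V) → Bool) × Finset ((V × Z) ⊕ (Z × V))) :=
    HH.toList.map fun h => (cH h, setH h) with hL1
  set L2 : List (((V × Z) ⊕ (Z × V) → Bool) × Finset ((V × Z) ⊕ (Z × V))) :=
    (Finset.univ ×ˢ HH).toList.map fun p => (cUH G p.1 p.2, setU p.1 p.2) with hL2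
  set L := L1 ++ L2 with hL
  have hmap1 : L1.map Prod.fst = HH.toList.map cH := by
    rw [hL1, List.map_map]; rfl
  have hmap2 : L2.map Prod.fst = (Finset.univ ×ˢ HH).toList.map fun p => cUH G p.1 p.2 := by
    rw [hL2, List.map_map]; rfl
  have hmem2 : ∀ c' ∈ L2.map Prod.fst,
      c' ∈ (Finset.univ ×ˢ HH).image fun p => cUH G p.1 p.2 := by
    intro c' hc'
    rw [hmap2] at hc'
    obtain ⟨p, hp, rfl⟩ := List.mem_map.mp hc'
    exact Finset.mem_image.mpr ⟨p, Finset.mem_toList.mp hp, rfl⟩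
  -- nodup
  have hnodup : (L.map Prod.fst).Nodup := by
    rw [hL, List.map_append]
    apply List.Nodup.append
    · rw [hmap1]
      exact (HH.nodup_toList).map_on
        (fun x _ y _ he => cH_inj he)
    · rw [hmap2]
      apply (Finset.nodup_toList _).map_on
      rintro ⟨u, h⟩ hx ⟨u', h'⟩ hy he
      rw [Finset.mem_toList, Finset.mem_product] at hx
      obtain ⟨he1, he2⟩ := cUH_inj G hk hx.2 he
      exact Prod.ext he1 he2
    · intro c hc1 hc2
      rw [hmap1] at hc1
      obtain ⟨h, _, rfl⟩ := List.mem_map.mp hc1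
      obtain ⟨⟨u, h''⟩, hm, he⟩ := Finset.mem_image.mp (hmem2 _ hc2)
      have hh'' : h'' ∈ HH := (Finset.mem_product.mp hm).2
      exact cH_ne_cUH G hZ hh'' u he.symm
  -- covers the class
  have hcover : (L.map Prod.fst).toFinset = redC (Z := Z) G k := by
    rw [hL, List.map_append, List.toFinset_append, hmap1, hmap2]
    unfold redC
    congr 1 <;> · ext c; simp [List.mem_map, Finset.mem_toList, hHH]
  -- the teaching condition
  have hteach : ∀ i (hi : i < L.length),
      IsTeachingSet ((L.drop i).map Prod.fst).toFinset (L.get ⟨i, hi⟩).1 (L.get ⟨i, hi⟩).2 := by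
    intro i hi
    rw [List.get_eq_getElem]
    by_cases hcase : i < L1.length
    · have hget : L[i] = L1[i] := List.getElem_append_left hcase
      have hL1i : L1[i]'hcase = (cH (HH.toList[i]'(by simpa [hL1] using hcase)),
          setH (HH.toList[i]'(by simpa [hL1] using hcase))) := by
        simp [hL1, List.getElem_map]
      have hhm : HH.toList[i]'(by simpa [hL1] using hcase) ∈ HH := by
        rw [← Finset.mem_toList]
        exact List.getElem_mem _
      rw [hget, hL1i]
      intro c' hc' hne
      apply TS_H _ hhm c' _ hne
      rw [← hcover]
      rw [List.mem_toFinset] at hc' ⊢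
      obtain ⟨p, hp, rfl⟩ := List.mem_map.mp hc'
      exact List.mem_map.mpr ⟨p, List.drop_subset _ _ hp, rfl⟩
    · push_neg at hcase
      have hdrop : L.drop i = L2.drop (i - L1.length) := by
        conv_lhs => rw [hL, show i = L1.length + (i - L1.length) by omega]
        rw [← List.drop_drop, List.drop_left]
      have hmem0 : L[i] ∈ L.drop i := by
        rw [List.drop_eq_getElem_cons hi]
        exact List.mem_cons_self
      have hmem : L[i] ∈ L2 := by
        rw [hdrop] at hmem0
        exact List.drop_subset _ _ hmem0
      obtain ⟨⟨u, h⟩, hp, hpe⟩ := List.mem_map.mp (by rw [hL2] at hmem; exact hmem)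
      rw [Finset.mem_toList, Finset.mem_product] at hp
      rw [← hpe]
      apply TS_U u h hp.2
      intro c' hc'
      rw [List.mem_toFinset] at hc'
      apply hmem2
      rw [hdrop] at hc'
      obtain ⟨q, hq, rfl⟩ := List.mem_map.mp hc'
      exact List.mem_map.mpr ⟨q, List.drop_subset _ _ hq, rfl⟩
  -- card bounds
  have hcards : ∀ p ∈ L, p.2.card ≤ k := by
    intro p hp
    rcases List.mem_append.mp hp with h1 | h2
    · obtain ⟨h, hh, rfl⟩ := List.mem_map.mp h1
      rw [Finset.mem_toList] at hh
      calc (setH h).card ≤ ((T.toList.zip (bsupp h).toList).map Sum.inl).length :=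
            List.toFinset_card_le _
        _ = (T.toList.zip (bsupp h).toList).length := List.length_map _
        _ ≤ T.toList.length := by rw [List.length_zip]; omega
        _ = k := by rw [Finset.length_toList, hTcard]
    · obtain ⟨⟨u, h⟩, hh, rfl⟩ := List.mem_map.mp h2
      rw [Finset.mem_toList, Finset.mem_product] at hh
      calc (setU u h).card ≤ (bsupp h).card := Finset.card_image_le
        _ = k := gadget_card hh.2
  exact Nat.sInf_le ⟨L, ⟨hnodup, hcover, hteach⟩, hcards⟩
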